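/- If φ : G(L) → ℝ^N satisfies linearity, the null axiom, and symmetry (φ_{σ(i)}(σ∘v) = φ_i(v) for every permutation σ of N), then φ_i(v) = Σ_{x ∈ L, x_i < k} p_{x_i; n_0,…,n_k} (v(x + 1_i) − v(x)), where the coefficient depends only on x_i and on the numbers n_j of components of x_{-i} equal to j, for j = 0,…,k. -/

import Mathlib

open Finset
open scoped Classical

/-- The vector space of `k`-ary games: functions `v : L → ℝ` with `v 0 = 0`. -/
noncomputable def Games (n k : ℕ) : Submodule ℝ ((Fin n → Fin (k+1)) → ℝ) :=
  LinearMap.ker (LinearMap.proj (0 : Fin n → Fin (k+1)))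

/-- `incr i x` is `x + 1_i` (increase coordinate `i` by one, capped at `k`). -/
def incr {n k : ℕ} (i : Fin n) (x : Fin n → Fin (k+1)) : Fin n → Fin (k+1) :=
  fun j => if j = i then ⟨min ((x i : ℕ) + 1) k, by omega⟩ else x j

/-- Player `i` is null for `v`. -/
def IsNull {n k : ℕ} (i : Fin n) (v : (Fin n → Fin (k+1)) → ℝ) : Prop :=
  ∀ x : Fin n → Fin (k+1), (x i : ℕ) < k → v (incr i x) = v x

/-- The game `σ ∘ v`, defined by `(σ ∘ v)(σ(x)) = v(x)` where `σ(x)_{σ(i)} = x_i`. -/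
def permGame {n k : ℕ} (σ : Equiv.Perm (Fin n)) (v : Games n k) : Games n k :=
  ⟨fun y => (v : (Fin n → Fin (k+1)) → ℝ) (fun i => y (σ i)), v.2⟩

/-- `countLevel i x j` is the number of components of `x_{-i}` equal to level `j`. -/
def countLevel {n k : ℕ} (i : Fin n) (x : Fin n → Fin (k+1)) (j : Fin (k+1)) : ℕ :=
  (univ.filter (fun l : Fin n => l ≠ i ∧ x l = j)).card

-- ### auxiliary lemmas

lemma exists_perm_comp {α β : Type*} [Fintype α] (f g : α → β)
    (h : ∀ b, Nat.card {a // f a = b} = Nat.card {a // g a = b}) :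
    ∃ σ : Equiv.Perm α, ∀ a, g (σ a) = f a := by
  have e : ∀ b, {a // f a = b} ≃ {a // g a = b} := fun b =>
    Fintype.equivOfCardEq (by rw [← Nat.card_eq_fintype_card, ← Nat.card_eq_fintype_card]; exact h b)
  refine ⟨(Equiv.sigmaFiberEquiv f).symm.trans
    ((Equiv.sigmaCongrRight e).trans (Equiv.sigmaFiberEquiv g)), ?_⟩
  intro a
  exact (e (f a) ⟨a, rfl⟩).2

variable {n k : ℕ}

lemma mem_games_iff (v : (Fin n → Fin (k+1)) → ℝ) : v ∈ Games n k ↔ v 0 = 0 := by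
  simp [Games]

lemma countLevel_update (i : Fin n) (x : Fin n → Fin (k+1)) (t : Fin (k+1)) :
    countLevel i (Function.update x i t) = countLevel i x := by
  funext j
  unfold countLevel
  congr 1
  apply Finset.filter_congr
  intro l _
  by_cases hl : l = i
  · simp [hl]
  · simp [hl, Function.update_of_ne hl]

noncomputable def dgame (n k : ℕ) (y : Fin n → Fin (k+1)) : Games n k :=
  ⟨fun x => if y = 0 then (0:ℝ) else if x = y then 1 else 0, by
    rw [mem_games_iff]
    split_ifs with h1 h2
    · rfl
    · exact absurd h2.symm h1
    · rfl⟩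

lemma dgame_coe (y x : Fin n → Fin (k+1)) :
    (dgame n k y : (Fin n → Fin (k+1)) → ℝ) x
      = if y = 0 then (0:ℝ) else if x = y then 1 else 0 := rfl

lemma games_decomp (v : Games n k) :
    v = ∑ y : Fin n → Fin (k+1), (v : (Fin n → Fin (k+1)) → ℝ) y • dgame n k y := by
  apply Subtype.ext
  funext x
  rw [Submodule.coe_sum, Finset.sum_apply]
  symm
  rw [Finset.sum_eq_single x]
  · by_cases hx : x = 0
    · simp [dgame_coe, hx, (mem_games_iff _).1 v.2]
    · simp [dgame_coe, hx]
  · intro y _ hyx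
    by_cases hy : y = 0 <;> simp [dgame_coe, hy, Ne.symm hyx]
  · simp

lemma permGame_dgame (σ : Equiv.Perm (Fin n)) (y z : Fin n → Fin (k+1))
    (hz : ∀ l, z (σ l) = y l) :
    permGame σ (dgame n k y) = dgame n k z := by
  have hzy : z ∘ σ = y := funext hz
  have h0 : y = 0 ↔ z = 0 := by
    constructor
    · intro h
      funext m
      have := hz (σ.symm m)
      simp [h] at this
      simpa using this
    · intro h
      funext l
      have := hz l
      simp [h] at this
      simpa using this.symm
  apply Subtype.ext
  funext x
  show (dgame n k y : (Fin n → Fin (k+1)) → ℝ) (fun l => x (σ l))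
      = (dgame n k z : (Fin n → Fin (k+1)) → ℝ) x
  rw [dgame_coe, dgame_coe]
  have hxy : (fun l => x (σ l)) = y ↔ x = z := by
    constructor
    · intro h
      funext m
      have h2 : x (σ (σ.symm m)) = y (σ.symm m) := congrFun h (σ.symm m)
      rw [← hz (σ.symm m)] at h2
      simpa using h2
    · intro h
      funext l
      rw [h, ← hz l]
  by_cases h1 : y = 0
  · simp [h1, h0.1 h1]
  · rw [if_neg h1, if_neg (fun hh => h1 (h0.2 hh))]
    by_cases h2 : (fun l => x (σ l)) = y
    · rw [if_pos h2, if_pos (hxy.1 h2)]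
    · rw [if_neg h2, if_neg (fun hh => h2 (hxy.2 hh))]

lemma sum_indicator_update (i : Fin n) (y x : Fin n → Fin (k+1)) :
    ∑ t : Fin (k+1), (if x = Function.update y i t then (1:ℝ) else 0)
      = if (∀ l, l ≠ i → x l = y l) then 1 else 0 := by
  rw [Finset.sum_eq_single (x i)]
  · have : (x = Function.update y i (x i)) ↔ (∀ l, l ≠ i → x l = y l) := by
      constructor
      · intro h l hl
        rw [h]
        simp [Function.update_of_ne hl]
      · intro h
        funext l
        by_cases hl : l = i
        · subst hl; simp
        · simp [Function.update_of_ne hl, h l hl]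
    simp [this]
  · intro t _ ht
    rw [if_neg]
    intro h
    apply ht
    have := congrFun h i
    simpa using this.symm
  · simp

lemma isnull_ngame (i : Fin n) (y : Fin n → Fin (k+1)) (hy : ∃ l, l ≠ i ∧ y l ≠ 0) :
    IsNull i ((∑ t : Fin (k+1), dgame n k (Function.update y i t) :
      Games n k) : (Fin n → Fin (k+1)) → ℝ) := by
  intro x hx
  rw [Submodule.coe_sum]
  rw [Finset.sum_apply, Finset.sum_apply]
  have hne : ∀ t : Fin (k+1), Function.update y i t ≠ 0 := by
    intro t h
    obtain ⟨l, hl, hl0⟩ := hy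
    apply hl0
    have := congrFun h l
    rwa [Function.update_of_ne hl] at this
  have key : ∀ x' : Fin n → Fin (k+1),
      ∑ t : Fin (k+1), (dgame n k (Function.update y i t) : (Fin n → Fin (k+1)) → ℝ) x'
        = if (∀ l, l ≠ i → x' l = y l) then 1 else 0 := by
    intro x'
    rw [← sum_indicator_update i y x']
    apply Finset.sum_congr rfl
    intro t _
    rw [dgame_coe, if_neg (hne t)]
  rw [key, key]
  have : ∀ l, l ≠ i → incr i x l = x l := by
    intro l hl
    simp [incr, hl]
  by_cases h : ∀ l, l ≠ i → x l = y l
  · rw [if_pos h, if_pos (fun l hl => (this l hl).trans (h l hl))]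
  · rw [if_neg h, if_neg]
    intro h2
    exact h fun l hl => (this l hl).symm.trans (h2 l hl)

lemma fiber_card_false (i : Fin n) (y : Fin n → Fin (k+1)) (b : Fin (k+1)) :
    Nat.card {l : Fin n // (y l, decide (l = i)) = (b, false)} = countLevel i y b := by
  rw [Nat.card_eq_fintype_card, Fintype.card_subtype]
  unfold countLevel
  congr 1
  apply Finset.filter_congr
  intro l _
  simp [Prod.ext_iff, and_comm]

lemma fiber_card_true (i : Fin n) (y : Fin n → Fin (k+1)) (b : Fin (k+1)) :
    Nat.card {l : Fin n // (y l, decide (l = i)) = (b, true)}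
      = if y i = b then 1 else 0 := by
  rw [Nat.card_eq_fintype_card, Fintype.card_subtype]
  by_cases hb : y i = b
  · rw [if_pos hb]
    have : (univ.filter (fun l : Fin n => (y l, decide (l = i)) = (b, true))) = {i} := by
      ext l
      simp only [Finset.mem_filter, Finset.mem_univ, true_and, Finset.mem_singleton,
        Prod.ext_iff, decide_eq_true_eq]
      constructor
      · rintro ⟨_, h⟩; exact h
      · rintro rfl; exact ⟨hb, rfl⟩
    rw [this, Finset.card_singleton]
  · rw [if_neg hb]
    rw [Finset.card_eq_zero]
    ext l
    simp only [Finset.mem_filter, Finset.mem_univ, true_and, Prod.ext_iff,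
      decide_eq_true_eq, Finset.notMem_empty, iff_false, not_and]
    rintro h rfl
    exact hb h

lemma a_welldef (φ : Games n k →ₗ[ℝ] (Fin n → ℝ))
    (hsym : ∀ (σ : Equiv.Perm (Fin n)) (v : Games n k) (i : Fin n),
      φ (permGame σ v) (σ i) = φ v i)
    (i j : Fin n) (y z : Fin n → Fin (k+1)) (hv : y i = z j)
    (hc : countLevel i y = countLevel j z) :
    φ (dgame n k y) i = φ (dgame n k z) j := by
  have hcard : ∀ b : Fin (k+1) × Bool,
      Nat.card {l : Fin n // (y l, decide (l = i)) = b}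
        = Nat.card {l : Fin n // (z l, decide (l = j)) = b} := by
    rintro ⟨b, c⟩
    cases c
    · rw [fiber_card_false, fiber_card_false, congrFun hc b]
    · rw [fiber_card_true, fiber_card_true, hv]
  obtain ⟨σ, hσ⟩ := exists_perm_comp (fun l => (y l, decide (l = i)))
      (fun l => (z l, decide (l = j))) hcard
  have hz : ∀ l, z (σ l) = y l := fun l => congrArg Prod.fst (hσ l)
  have hσi : σ i = j := by
    have := congrArg Prod.snd (hσ i)
    simpa using this
  rw [← hsym σ (dgame n k y) i, permGame_dgame σ y z hz, hσi]

lemma Ioi_pred_eq (u t : Fin (k+1)) (h : (u:ℕ) = (t:ℕ) - 1) (ht : 0 < (t:ℕ)) :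
    Finset.Ioi u = insert t (Finset.Ioi t) := by
  ext s
  simp only [Finset.mem_Ioi, Finset.mem_insert, Fin.lt_def, Fin.ext_iff, h]
  omega

lemma Ioi_last_eq (t : Fin (k+1)) (ht : ¬ (t:ℕ) < k) : Finset.Ioi t = ∅ := by
  ext s
  simp only [Finset.mem_Ioi, Finset.notMem_empty, iff_false, not_lt, Fin.le_def]
  have := s.isLt
  omega

lemma univ_eq_insert_Ioi_zero : (univ : Finset (Fin (k+1))) = insert 0 (Finset.Ioi 0) := by
  ext s
  simp only [Finset.mem_univ, Finset.mem_insert, Finset.mem_Ioi, true_iff, Fin.lt_def,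
    Fin.ext_iff, Fin.val_zero]
  omega

lemma incr_update_pred (i : Fin n) (y : Fin n → Fin (k+1)) (ht : 0 < (y i : ℕ))
    (u : Fin (k+1)) (hu : (u:ℕ) = (y i : ℕ) - 1) :
    incr i (Function.update y i u) = y := by
  funext j
  by_cases hj : j = i
  · subst hj
    have hlt := (y j).isLt
    simp only [incr, if_true, eq_self_iff_true, Function.update_self, Fin.ext_iff, hu]
    omega
  · simp only [incr, if_neg hj, Function.update_of_ne hj]

theorem stmt_6 (n k : ℕ) (φ : Games n k →ₗ[ℝ] (Fin n → ℝ))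
    (hnull : ∀ (i : Fin n) (v : Games n k),
      IsNull i (v : (Fin n → Fin (k+1)) → ℝ) → φ v i = 0)
    (hsym : ∀ (σ : Equiv.Perm (Fin n)) (v : Games n k) (i : Fin n),
      φ (permGame σ v) (σ i) = φ v i) :
    ∃ p : Fin (k+1) → (Fin (k+1) → ℕ) → ℝ,
      ∀ (i : Fin n) (v : Games n k),
        φ v i = ∑ x ∈ univ.filter (fun x : Fin n → Fin (k+1) => (x i : ℕ) < k),
          p (x i) (countLevel i x) *
            ((v : (Fin n → Fin (k+1)) → ℝ) (incr i x) -
             (v : (Fin n → Fin (k+1)) → ℝ) x) := by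
  classical
  set p : Fin (k+1) → (Fin (k+1) → ℕ) → ℝ := fun t m =>
    if h : ∃ w : Fin n × (Fin n → Fin (k+1)), countLevel w.1 w.2 = m then
      ∑ s ∈ Finset.Ioi t, φ (dgame n k (Function.update h.choose.2 h.choose.1 s)) h.choose.1
    else 0 with hp
  refine ⟨p, ?_⟩
  have pA : ∀ (t : Fin (k+1)) (i : Fin n) (x : Fin n → Fin (k+1)),
      p t (countLevel i x)
        = ∑ s ∈ Finset.Ioi t, φ (dgame n k (Function.update x i s)) i := by
    intro t i x
    have hw : ∃ w : Fin n × (Fin n → Fin (k+1)), countLevel w.1 w.2 = countLevel i x :=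
      ⟨(i, x), rfl⟩
    simp only [hp]
    rw [dif_pos hw]
    apply Finset.sum_congr rfl
    intro s _
    apply a_welldef φ hsym
    · rw [Function.update_self, Function.update_self]
    · rw [countLevel_update, countLevel_update, hw.choose_spec]
  intro i v
  have hv0 : (v : (Fin n → Fin (k+1)) → ℝ) 0 = 0 := (mem_games_iff _).1 v.2
  have step1 : φ v i = ∑ y : Fin n → Fin (k+1),
      (v : (Fin n → Fin (k+1)) → ℝ) y * φ (dgame n k y) i := by
    conv_lhs => rw [games_decomp v]
    rw [map_sum, Finset.sum_apply]
    exact Finset.sum_congr rfl fun y _ => by rw [map_smul]; simp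
  rw [step1]
  have step2 : ∀ y : Fin n → Fin (k+1),
      (v : (Fin n → Fin (k+1)) → ℝ) y * φ (dgame n k y) i
        = (v : (Fin n → Fin (k+1)) → ℝ) y *
          ((if 0 < (y i : ℕ) then
              p ⟨(y i : ℕ) - 1, by have := (y i).isLt; omega⟩ (countLevel i y) else 0)
           - (if (y i : ℕ) < k then p (y i) (countLevel i y) else 0)) := by
    intro y
    by_cases hy0 : y = 0
    · rw [hy0, hv0, zero_mul, zero_mul]
    congr 1
    rcases Nat.eq_zero_or_pos (y i : ℕ) with ht | ht
    · -- y i = 0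
      have hyi : y i = 0 := Fin.ext (by simpa using ht)
      obtain ⟨l, hl⟩ : ∃ l, y l ≠ 0 := by
        by_contra h
        push_neg at h
        exact hy0 (funext fun l => h l)
      have hli : l ≠ i := fun h => hl (h ▸ hyi)
      have hvl : (y l : ℕ) ≠ 0 := by intro h; exact hl (Fin.ext (by rw [h, Fin.val_zero]))
      have hk : 0 < k := by have := (y l).isLt; omega
      have hnullsum : ∑ t' : Fin (k+1), φ (dgame n k (Function.update y i t')) i = 0 := by
        have h1 := hnull i (∑ t' : Fin (k+1), dgame n k (Function.update y i t'))
          (isnull_ngame i y ⟨l, hli, hl⟩)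
        rwa [map_sum, Finset.sum_apply] at h1
      rw [if_neg (by omega), if_pos (show (y i : ℕ) < k by omega), pA, hyi]
      have hsplit : ∑ t' : Fin (k+1), φ (dgame n k (Function.update y i t')) i
          = φ (dgame n k (Function.update y i 0)) i
            + ∑ s ∈ Finset.Ioi (0 : Fin (k+1)), φ (dgame n k (Function.update y i s)) i := by
        rw [univ_eq_insert_Ioi_zero, Finset.sum_insert (by simp)]
      have hupd : Function.update y i 0 = y := by
        rw [← hyi]; exact Function.update_eq_self i y
      rw [hupd] at hsplit
      rw [hnullsum] at hsplit
      linarith [hsplit]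
    · -- y i > 0
      rw [if_pos ht, pA,
        Ioi_pred_eq ⟨(y i : ℕ) - 1, by have := (y i).isLt; omega⟩ (y i) rfl ht,
        Finset.sum_insert (by simp), Function.update_eq_self]
      by_cases hk2 : (y i : ℕ) < k
      · rw [if_pos hk2, pA]; ring
      · rw [if_neg hk2, Ioi_last_eq (y i) hk2, Finset.sum_empty]; ring
  rw [Finset.sum_congr rfl fun y _ => step2 y]
  simp only [mul_sub]
  rw [Finset.sum_sub_distrib]
  have hB : ∑ y : Fin n → Fin (k+1), (v : (Fin n → Fin (k+1)) → ℝ) y *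
        (if (y i : ℕ) < k then p (y i) (countLevel i y) else 0)
      = ∑ x ∈ univ.filter (fun x : Fin n → Fin (k+1) => (x i : ℕ) < k),
          p (x i) (countLevel i x) * (v : (Fin n → Fin (k+1)) → ℝ) x := by
    rw [Finset.sum_filter]
    apply Finset.sum_congr rfl
    intro y _
    by_cases h : (y i : ℕ) < k <;> simp [h, mul_comm]
  have hA : ∑ y : Fin n → Fin (k+1), (v : (Fin n → Fin (k+1)) → ℝ) y *
        (if 0 < (y i : ℕ) then
          p ⟨(y i : ℕ) - 1, by have := (y i).isLt; omega⟩ (countLevel i y) else 0)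
      = ∑ x ∈ univ.filter (fun x : Fin n → Fin (k+1) => (x i : ℕ) < k),
          p (x i) (countLevel i x) * (v : (Fin n → Fin (k+1)) → ℝ) (incr i x) := by
    simp only [mul_ite, mul_zero]
    rw [← Finset.sum_filter]
    apply Finset.sum_nbij'
      (i := fun y => Function.update y i ⟨(y i : ℕ) - 1, by have := (y i).isLt; omega⟩)
      (j := fun x => incr i x)
    · intro y hy
      simp only [Finset.mem_filter, Finset.mem_univ, true_and] at hy ⊢
      rw [Function.update_self]
      have := (y i).isLt
      simp only []
      omega
    · intro x hx
      simp only [Finset.mem_filter, Finset.mem_univ, true_and] at hx ⊢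
      simp [incr]
      omega
    · intro y hy
      simp only [Finset.mem_filter, Finset.mem_univ, true_and] at hy
      exact incr_update_pred i y hy _ rfl
    · intro x hx
      simp only [Finset.mem_filter, Finset.mem_univ, true_and] at hx
      funext j
      by_cases hj : j = i
      · subst hj
        rw [Function.update_self]
        simp only [incr, if_true, eq_self_iff_true, Fin.ext_iff]
        omega
      · rw [Function.update_of_ne hj]
        simp only [incr, if_neg hj]
    · intro y hy
      simp only [Finset.mem_filter, Finset.mem_univ, true_and] at hy
      rw [Function.update_self, countLevel_update, incr_update_pred i y hy _ rfl, mul_comm]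
  rw [hA, hB, ← Finset.sum_sub_distrib]
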